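/- Suppose f : Θ × [0,1]^n → ℝ is a model differentiable in its parameters θ ∈ Θ = ℝ^m, such that (uniform trainability) ∇_θ f(θ,x) ≠ 0 for all x and θ, and (max-distal orthogonality with threshold δ > 0) for all x, v ∈ [0,1]^n, max_i |x_i − v_i| > δ implies ∇_θ f(θ,x) · ∇_θ f(θ,v) = 0. Then m ≥ z^n for any integer z with 1/z > δ, i.e., the parameter dimension is at least ⌈(1/δ)⌉-exponential in n. -/

import Mathlib

theorem uniformly_trainable_max_distal_orthogonal_exponential
    {n m : ℕ}
    (f : EuclideanSpace ℝ (Fin m) → (Fin n → ℝ) → ℝ)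
    (grad : EuclideanSpace ℝ (Fin m) → (Fin n → ℝ) → EuclideanSpace ℝ (Fin m))
    (hgrad : ∀ θ x, HasGradientAt (fun θ' => f θ' x) (grad θ x) θ)
    (δ : ℝ) (hδ : 0 < δ)
    (htrain : ∀ θ x, (∀ i, x i ∈ Set.Icc (0 : ℝ) 1) → grad θ x ≠ 0)
    (horth : ∀ θ x v, (∀ i, x i ∈ Set.Icc (0 : ℝ) 1) →
      (∀ i, v i ∈ Set.Icc (0 : ℝ) 1) →
      (∃ i, δ < |x i - v i|) →
      (inner ℝ (grad θ x) (grad θ v) : ℝ) = 0)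
    (z : ℕ) (hz : 1 ≤ z) (hzδ : δ < (1 : ℝ) / z) :
    z ^ n ≤ m := by
  have hzpos : (0 : ℝ) < z := by exact_mod_cast hz
  set p : (Fin n → Fin z) → (Fin n → ℝ) := fun k i => (k i : ℝ) / z with hp
  have hmem : ∀ k, ∀ i, p k i ∈ Set.Icc (0 : ℝ) 1 := by
    intro k i
    constructor
    · positivity
    · rw [div_le_one hzpos]
      exact_mod_cast le_of_lt (k i).isLt
  set w : (Fin n → Fin z) → EuclideanSpace ℝ (Fin m) := fun k => grad 0 (p k) with hw
  have hli : LinearIndependent ℝ w := by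
    apply linearIndependent_of_ne_zero_of_inner_eq_zero
    · intro k; exact htrain 0 (p k) (hmem k)
    · intro k k' hne
      apply horth 0 (p k) (p k') (hmem k) (hmem k')
      obtain ⟨i, hi⟩ := Function.ne_iff.mp hne
      refine ⟨i, lt_of_lt_of_le hzδ ?_⟩
      rw [hp]
      have : ((k i : ℝ) - (k' i : ℝ)) / z = (k i : ℝ) / z - (k' i : ℝ) / z := by ring
      rw [← this, abs_div, abs_of_pos hzpos]
      gcongr
      have : (k i : ℝ) ≠ (k' i : ℝ) := by
        exact_mod_cast fun h => hi (Fin.ext (by exact_mod_cast h))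
      have h1 : (1 : ℝ) ≤ |(k i : ℝ) - (k' i : ℝ)| := by
        have : ((k i : ℤ)) ≠ (k' i : ℤ) := by exact_mod_cast this
        have := Int.one_le_abs (sub_ne_zero.mpr this)
        push_cast at this ⊢
        exact_mod_cast this
      exact h1
  have := hli.fintype_card_le_finrank
  simpa [finrank_euclideanSpace] using this
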